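/- Let κ be a cardinal and λ a cardinal with λ⁺ < κ and κ regular. Given a λ-bounded coloring f : [κ]^2 → κ and a set S ⊆ κ with |S| < κ such that f restricted to [S]^2 is normal, there exists γ < κ with γ > sup S such that f restricted to [S ∪ {γ}]^2 is normal. (Normalization step: any λ-bounded coloring on [κ]^2 admits a set B of size κ on which it is normal.) -/

import Mathlib

open Ordinal Set Cardinal

/-- Normalization step: given a `λ`-bounded coloring `f` of pairs from a regular
cardinal `κ` with `λ⁺ < κ`, any set `S` of size `< κ` on which `f` is normal can
be extended by one more element above `sup S` keeping `f` normal. -/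
theorem normalization_step (κ lam : Cardinal.{0})
    (hκinf : ℵ₀ ≤ κ) (hreg : κ.IsRegular) (hlam : Order.succ lam < κ)
    (f : Ordinal → Ordinal → Ordinal)
    (hbdd : ∀ ξ : Ordinal,
      (#{p : Ordinal × Ordinal // p.1 < p.2 ∧ p.2 < κ.ord ∧ f p.1 p.2 = ξ}) ≤
        Cardinal.lift.{1} lam)
    (S : Set Ordinal) (hSsub : S ⊆ Set.Iio κ.ord) (hSsize : #S < Cardinal.lift.{1} κ)
    (hSnorm : ∀ a ∈ S, ∀ b ∈ S, ∀ a' ∈ S, ∀ b' ∈ S,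
      a < b → a' < b' → f a b = f a' b' → b = b') :
    ∃ γ, γ < κ.ord ∧ (∀ s ∈ S, s < γ) ∧
      (∀ a ∈ S ∪ {γ}, ∀ b ∈ S ∪ {γ}, ∀ a' ∈ S ∪ {γ}, ∀ b' ∈ S ∪ {γ},
        a < b → a' < b' → f a b = f a' b' → b = b') := by
  -- the set of "bad" ordinals that must be avoided
  set B : Set Ordinal :=
    {b | b < κ.ord ∧ ∃ a ∈ S, ∃ a' ∈ S, ∃ b' ∈ S, a' < b' ∧ a < b ∧ f a b = f a' b'} with hB
  have hKinf : ℵ₀ ≤ Cardinal.lift.{1} κ := by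
    rw [← Cardinal.lift_aleph0.{1, 0}]
    exact Cardinal.lift_le.2 hκinf
  have hlam' : Cardinal.lift.{1} lam < Cardinal.lift.{1} κ :=
    Cardinal.lift_lt.2 ((Order.lt_succ lam).trans hlam)
  -- bound the cardinality of B
  have hBsize : #B < Cardinal.lift.{1} κ := by
    set A : ↥S × ↥S × ↥S → Set Ordinal := fun p =>
      {b | (p.1 : Ordinal) < b ∧ b < κ.ord ∧ f p.1 b = f p.2.1 p.2.2} with hA
    have hsub : B ⊆ ⋃ p, A p := by
      rintro b ⟨hbκ, a, ha, a', ha', b', hb', hlt, hab, heq⟩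
      exact Set.mem_iUnion.2 ⟨⟨⟨a, ha⟩, ⟨a', ha'⟩, ⟨b', hb'⟩⟩, hab, hbκ, heq⟩
    have hAle : ∀ p, #(A p) ≤ Cardinal.lift.{1} lam := by
      intro p
      refine le_trans (Cardinal.mk_le_of_injective (f := fun b =>
        (⟨((p.1 : Ordinal), (b : Ordinal)), b.2.1, b.2.2.1, b.2.2.2⟩ :
          {q : Ordinal × Ordinal // q.1 < q.2 ∧ q.2 < κ.ord ∧
            f q.1 q.2 = f p.2.1 p.2.2})) ?_) (hbdd _)
      rintro ⟨b, hb⟩ ⟨c, hc⟩ h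
      simpa using congrArg (fun x => x.1.2) h
    have h1 : #(⋃ p, A p) ≤ #(↥S × ↥S × ↥S) * Cardinal.lift.{1} lam := by
      refine (Cardinal.mk_iUnion_le A).trans ?_
      exact mul_le_mul_right (ciSup_le' hAle) _
    have h2 : #(↥S × ↥S × ↥S) < Cardinal.lift.{1} κ := by
      simp only [Cardinal.mk_prod, Cardinal.lift_id]
      exact Cardinal.mul_lt_of_lt hKinf hSsize (Cardinal.mul_lt_of_lt hKinf hSsize hSsize)
    calc #B ≤ #(⋃ p, A p) := Cardinal.mk_le_mk_of_subset hsub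
      _ ≤ #(↥S × ↥S × ↥S) * Cardinal.lift.{1} lam := h1
      _ < Cardinal.lift.{1} κ := Cardinal.mul_lt_of_lt hKinf h2 hlam'
  set T : Set Ordinal := S ∪ B with hT
  have hTsub : T ⊆ Set.Iio κ.ord := by
    rintro t (ht | ht)
    · exact hSsub ht
    · exact ht.1
  have hTsize : #T < Cardinal.lift.{1} κ := by
    refine lt_of_le_of_lt (Cardinal.mk_union_le _ _) ?_
    exact Cardinal.add_lt_of_lt hKinf hSsize hBsize
  -- transfer T to a small type to compute its supremum
  let e := Ordinal.ToType.mk (o := κ.ord)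
  set T₀ : Set κ.ord.ToType := {x | (e.symm x : Ordinal) ∈ T} with hT₀
  have hT₀size : #T₀ < κ := by
    have h1 : Cardinal.lift.{1} #T₀ ≤ #T := by
      have hemb : Nonempty (↥T₀ ↪ ↥T) :=
        ⟨⟨fun x => ⟨(e.symm x.1 : Ordinal), x.2⟩, by
          rintro ⟨x, hx⟩ ⟨y, hy⟩ h
          simp only [Subtype.mk.injEq] at h ⊢
          exact e.symm.injective (Subtype.ext h)⟩⟩
      simpa using Cardinal.lift_mk_le'.2 hemb
    exact Cardinal.lift_lt.1 (h1.trans_lt hTsize)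
  set g : ↥T₀ → Ordinal := fun x => ((e.symm x.1 : Set.Iio κ.ord) : Ordinal) with hg
  have hgsup : iSup g < κ.ord := by
    refine Cardinal.iSup_lt_ord_of_isRegular hreg hT₀size ?_
    intro i
    exact (e.symm i.1).2
  set γ : Ordinal := iSup g + 1 with hγ
  have hγκ : γ < κ.ord := by
    rw [hγ, Ordinal.add_one_eq_succ]
    exact (Cardinal.isSuccLimit_ord hκinf).succ_lt hgsup
  have hTlt : ∀ t ∈ T, t < γ := by
    intro t ht
    have htκ : t < κ.ord := hTsub ht
    have : t ≤ iSup g := by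
      have hmem : e ⟨t, htκ⟩ ∈ T₀ := by
        simp only [hT₀, Set.mem_setOf_eq, OrderIso.symm_apply_apply]
        exact ht
      have := Ordinal.le_iSup g ⟨e ⟨t, htκ⟩, hmem⟩
      simpa [hg] using this
    exact this.trans_lt (lt_add_one _)
  have hSlt : ∀ s ∈ S, s < γ := fun s hs => hTlt s (Or.inl hs)
  have hγB : γ ∉ B := fun h => lt_irrefl γ (hTlt γ (Or.inr h))
  refine ⟨γ, hγκ, hSlt, ?_⟩
  rintro a ha b hb a' ha' b' hb' hab ha'b' heq
  -- reduce membership: an element < γ in S ∪ {γ} is in S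
  have hmemS : ∀ x ∈ S ∪ ({γ} : Set Ordinal), x < γ → x ∈ S := by
    rintro x (hx | hx) hlt
    · exact hx
    · exact absurd hlt (by simp_all)
  rcases hb with hbS | hbγ
  · have haS : a ∈ S := hmemS a ha (hab.trans (hSlt b hbS))
    rcases hb' with hb'S | hb'γ
    · have ha'S : a' ∈ S := hmemS a' ha' (ha'b'.trans (hSlt b' hb'S))
      exact hSnorm a haS b hbS a' ha'S b' hb'S hab ha'b' heq
    · -- b' = γ, b ∈ S: γ would be bad
      rw [Set.mem_singleton_iff] at hb'γ
      subst hb'γ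
      have ha'S : a' ∈ S := hmemS a' ha' ha'b'
      exact absurd ⟨hγκ, a', ha'S, a, haS, b, hbS, hab, ha'b', heq.symm⟩ hγB
  · rw [Set.mem_singleton_iff] at hbγ
    subst hbγ
    rcases hb' with hb'S | hb'γ
    · have haS : a ∈ S := hmemS a ha hab
      have ha'S : a' ∈ S := hmemS a' ha' (ha'b'.trans (hSlt b' hb'S))
      exact absurd ⟨hγκ, a, haS, a', ha'S, b', hb'S, ha'b', hab, heq⟩ hγB
    · rw [Set.mem_singleton_iff] at hb'γ
      rw [hb'γ]
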